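/- Let H₀ be a symmetric N×N real matrix with λ_max(H₀) < λ, let B be an N×2 real matrix, Θ a positive definite diagonal 2×2 matrix, H = H₀ + BΘB^T, and suppose x ∈ ℝ² is a nonzero vector with S(λ)x = 0 where S(z) = I₂ + Θ^{1/2}B^T(H₀ − zI)⁻¹BΘ^{1/2}. Then the vector r = (H₀ − λI)⁻¹ B Θ^{1/2} x satisfies H r = λ r, ‖r‖² = x^T S'(λ) x, and B^T r = −Θ^{-1/2} x. -/

import Mathlib

open Matrix

lemma posdef_conj_unitary {n : Type*} [Fintype n] [DecidableEq n]
    (U : Matrix n n ℝ) (hU : U ∈ Matrix.unitaryGroup n ℝ)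
    {D : Matrix n n ℝ} (hD : D.PosDef) : (U * D * star U).PosDef := by
  rw [Matrix.posDef_iff_dotProduct_mulVec]
  constructor
  · exact Matrix.isHermitian_mul_mul_conjTranspose U hD.isHermitian
  · intro v hv
    have hUU : U * star U = 1 := (Matrix.mem_unitaryGroup_iff).mp hU
    set y : n → ℝ := (star U) *ᵥ v with hy
    have hyne : y ≠ 0 := by
      intro h0
      apply hv
      have hv' : U *ᵥ y = v := by
        rw [hy, Matrix.mulVec_mulVec, hUU, Matrix.one_mulVec]
      rw [← hv', h0, Matrix.mulVec_zero]
    have key : star v ⬝ᵥ ((U * D * star U) *ᵥ v) = star y ⬝ᵥ (D *ᵥ y) := by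
      rw [← Matrix.mulVec_mulVec, ← Matrix.mulVec_mulVec, Matrix.dotProduct_mulVec]
      congr 1
      rw [hy, Matrix.star_mulVec]
      simp [Matrix.star_eq_conjTranspose, Matrix.conjTranspose_conjTranspose]
    rw [key]
    exact hD.dotProduct_mulVec_pos hyne

lemma isUnit_sub_smul {N : ℕ} (H₀ : Matrix (Fin N) (Fin N) ℝ) (hH₀ : H₀.IsHermitian)
    (lam : ℝ) (hlam : ∀ i, hH₀.eigenvalues i < lam) :
    IsUnit (H₀ - lam • 1) := by
  have hspec := hH₀.spectral_theorem
  set U : Matrix (Fin N) (Fin N) ℝ := (hH₀.eigenvectorUnitary : Matrix (Fin N) (Fin N) ℝ)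
  have hU : U ∈ Matrix.unitaryGroup (Fin N) ℝ := hH₀.eigenvectorUnitary.2
  have hUU : U * star U = 1 := (Matrix.mem_unitaryGroup_iff).mp hU
  have hD : (Matrix.diagonal fun i => lam - hH₀.eigenvalues i).PosDef :=
    Matrix.posDef_diagonal_iff.mpr fun i => sub_pos.mpr (hlam i)
  have hPD : (lam • 1 - H₀).PosDef := by
    have heq : lam • (1 : Matrix (Fin N) (Fin N) ℝ) - H₀
        = U * (Matrix.diagonal fun i => lam - hH₀.eigenvalues i) * star U := by
      conv_lhs => rw [hspec, Unitary.conjStarAlgAut_apply]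
      have h1 : lam • (1 : Matrix (Fin N) (Fin N) ℝ) = U * (lam • 1) * star U := by
        rw [Matrix.mul_smul, Matrix.smul_mul, mul_one, hUU]
      rw [h1, ← Matrix.sub_mul, ← Matrix.mul_sub]
      congr 2
      rw [Matrix.smul_one_eq_diagonal]
      rw [show (Matrix.diagonal (RCLike.ofReal ∘ hH₀.eigenvalues) : Matrix (Fin N) (Fin N) ℝ)
          = Matrix.diagonal hH₀.eigenvalues from rfl]
      rw [← Matrix.diagonal_sub]
    rw [heq]
    exact posdef_conj_unitary U hU hD
  have h1 : IsUnit (lam • 1 - H₀) := hPD.isUnit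
  rw [show H₀ - lam • (1 : Matrix (Fin N) (Fin N) ℝ) = -(lam • 1 - H₀) from (neg_sub _ _).symm]
  exact h1.neg

/-- Outlier eigenvector of a rank-two perturbation from a kernel vector of the
2×2 Schur complement: if `S(λ)x = 0` with `λ > λ_max(H₀)` and `x ≠ 0`, then
`r = (H₀ − λI)⁻¹BΘ^{1/2}x` satisfies `Hr = λr`,
`‖r‖² = xᵀS'(λ)x`, and `Bᵀr = −Θ^{−1/2}x`. -/
theorem stmt19 (N : ℕ) (H₀ : Matrix (Fin N) (Fin N) ℝ) (hH₀ : H₀.IsHermitian)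
    (B : Matrix (Fin N) (Fin 2) ℝ) (θ : Fin 2 → ℝ) (hθ : ∀ i, 0 < θ i)
    (lam : ℝ) (hlam : ∀ i, hH₀.eigenvalues i < lam)
    (x : Fin 2 → ℝ) (hx : x ≠ 0) :
    let Θ : Matrix (Fin 2) (Fin 2) ℝ := Matrix.diagonal θ
    let Θh : Matrix (Fin 2) (Fin 2) ℝ := Matrix.diagonal fun i => Real.sqrt (θ i)
    let H : Matrix (Fin N) (Fin N) ℝ := H₀ + B * Θ * Bᵀ
    let S : Matrix (Fin 2) (Fin 2) ℝ := 1 + Θh * Bᵀ * (H₀ - lam • 1)⁻¹ * B * Θh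
    S.mulVec x = 0 →
    let r : Fin N → ℝ := ((H₀ - lam • 1)⁻¹ * B * Θh).mulVec x
    H.mulVec r = lam • r ∧
    r ⬝ᵥ r = x ⬝ᵥ (Θh * Bᵀ * ((H₀ - lam • 1)⁻¹ * (H₀ - lam • 1)⁻¹) * B * Θh).mulVec x ∧
    Bᵀ.mulVec r = -(Matrix.diagonal fun i => (Real.sqrt (θ i))⁻¹).mulVec x := by
  intro Θ Θh H S hS r
  set M := H₀ - lam • (1 : Matrix (Fin N) (Fin N) ℝ) with hM
  have hMunit : IsUnit M := isUnit_sub_smul H₀ hH₀ lam hlam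
  have hMdet : IsUnit M.det := (Matrix.isUnit_iff_isUnit_det M).mp hMunit
  have hMinv : M * M⁻¹ = 1 := Matrix.mul_nonsing_inv M hMdet
  set Θinv : Matrix (Fin 2) (Fin 2) ℝ :=
    Matrix.diagonal (fun i => (Real.sqrt (θ i))⁻¹) with hΘinv
  have hsqrt_ne : ∀ i, Real.sqrt (θ i) ≠ 0 := fun i =>
    ne_of_gt (Real.sqrt_pos.mpr (hθ i))
  have hΘinvΘh : Θinv * Θh = 1 := by
    rw [hΘinv, Matrix.diagonal_mul_diagonal, ← Matrix.diagonal_one]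
    exact congrArg Matrix.diagonal (funext fun i => inv_mul_cancel₀ (hsqrt_ne i))
  have hΘΘinv : Θ * Θinv = Θh := by
    rw [hΘinv, Matrix.diagonal_mul_diagonal]
    refine congrArg Matrix.diagonal (funext fun i => ?_)
    field_simp
    exact Real.div_sqrt
  have hK : (Θh * Bᵀ * M⁻¹ * B * Θh).mulVec x = -x := by
    have h := hS
    simp only [S] at h
    rw [Matrix.add_mulVec, Matrix.one_mulVec] at h
    exact eq_neg_of_add_eq_zero_right h
  have hC3 : Bᵀ.mulVec r = -(Θinv.mulVec x) := by
    have hmat : Bᵀ * (M⁻¹ * B * Θh) = Θinv * (Θh * Bᵀ * M⁻¹ * B * Θh) := by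
      simp only [Matrix.mul_assoc]
      rw [← Matrix.mul_assoc Θinv Θh, hΘinvΘh, Matrix.one_mul]
    calc Bᵀ.mulVec r = (Bᵀ * (M⁻¹ * B * Θh)).mulVec x := by
          rw [Matrix.mulVec_mulVec]
      _ = Θinv.mulVec ((Θh * Bᵀ * M⁻¹ * B * Θh).mulVec x) := by
          rw [hmat, ← Matrix.mulVec_mulVec]
      _ = Θinv.mulVec (-x) := by rw [hK]
      _ = -(Θinv.mulVec x) := by rw [Matrix.mulVec_neg]
  refine ⟨?_, ?_, hC3⟩
  · have hH0r : H₀.mulVec r = (B * Θh).mulVec x + lam • r := by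
      have hH0 : H₀ = M + lam • 1 := by rw [hM]; abel
      have hprod : H₀ * (M⁻¹ * B * Θh) = B * Θh + lam • (M⁻¹ * B * Θh) := by
        rw [hH0, Matrix.add_mul, Matrix.smul_mul, Matrix.one_mul]
        congr 1
        simp only [← Matrix.mul_assoc]
        rw [hMinv, Matrix.one_mul]
      calc H₀.mulVec r = (H₀ * (M⁻¹ * B * Θh)).mulVec x := by
            rw [Matrix.mulVec_mulVec]
        _ = (B * Θh + lam • (M⁻¹ * B * Θh)).mulVec x := by rw [hprod]
        _ = (B * Θh).mulVec x + lam • r := by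
            rw [Matrix.add_mulVec, Matrix.smul_mulVec]
    have hpert : (B * Θ * Bᵀ).mulVec r = -((B * Θh).mulVec x) := by
      calc (B * Θ * Bᵀ).mulVec r = (B * Θ).mulVec (Bᵀ.mulVec r) :=
            (Matrix.mulVec_mulVec r (B * Θ) Bᵀ).symm
        _ = (B * Θ).mulVec (-(Θinv.mulVec x)) := by rw [hC3]
        _ = -((B * Θ * Θinv).mulVec x) := by
            rw [Matrix.mulVec_neg, Matrix.mulVec_mulVec]
        _ = -((B * Θh).mulVec x) := by rw [Matrix.mul_assoc, hΘΘinv]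
    have hHr : H.mulVec r = H₀.mulVec r + (B * Θ * Bᵀ).mulVec r := by
      simp only [H]
      rw [Matrix.add_mulVec]
    rw [hHr, hH0r, hpert]
    abel
  · have h0 : H₀ᵀ = H₀ := by
      ext i j
      have h := congrFun (congrFun hH₀.eq i) j
      simpa using h
    have hMsymm : Mᵀ = M := by
      rw [hM, Matrix.transpose_sub, h0, Matrix.transpose_smul, Matrix.transpose_one]
    have hMinvT : (M⁻¹)ᵀ = M⁻¹ := by
      rw [Matrix.transpose_nonsing_inv, hMsymm]
    set P : Matrix (Fin N) (Fin 2) ℝ := M⁻¹ * B * Θh with hP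
    have hPT : Pᵀ = Θh * Bᵀ * M⁻¹ := by
      rw [hP, Matrix.transpose_mul, Matrix.transpose_mul, hMinvT,
        Matrix.diagonal_transpose]
      exact (Matrix.mul_assoc _ _ _).symm
    have hPTP : Pᵀ * P = Θh * Bᵀ * (M⁻¹ * M⁻¹) * B * Θh := by
      rw [hPT, hP]
      simp only [Matrix.mul_assoc]
    calc r ⬝ᵥ r = (P.mulVec x) ⬝ᵥ (P.mulVec x) := rfl
      _ = (P.mulVec x ᵥ* P) ⬝ᵥ x := by rw [Matrix.dotProduct_mulVec]
      _ = (Pᵀ.mulVec (P.mulVec x)) ⬝ᵥ x := by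
          rw [show P.mulVec x ᵥ* P = P.mulVec x ᵥ* (Pᵀ)ᵀ by rw [Matrix.transpose_transpose],
            Matrix.vecMul_transpose]
      _ = ((Pᵀ * P).mulVec x) ⬝ᵥ x := by rw [Matrix.mulVec_mulVec]
      _ = x ⬝ᵥ ((Θh * Bᵀ * (M⁻¹ * M⁻¹) * B * Θh).mulVec x) := by
          rw [hPTP, dotProduct_comm]
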